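/- Let n ≥ 3, ψ a permutation-symmetric state of n qudits, and X a matrix with X_{(1)}ψ ∈ S. Then for every polynomial f with complex coefficients, f(X)_{(1)}ψ ∈ S. -/

import Mathlib

open Matrix BigOperators Polynomial

/-- Permutation symmetry of an `n`-qudit state represented by its amplitudes. -/
def PSym {n d : ℕ} (ψ : (Fin n → Fin d) → ℂ) : Prop :=
  ∀ σ : Equiv.Perm (Fin n), ∀ x : Fin n → Fin d, ψ (x ∘ σ) = ψ x

/-- The operator `B` acting on the `k`-th tensor factor (identity elsewhere). -/
noncomputable def appAt {n d : ℕ} (k : Fin n) (B : Matrix (Fin d) (Fin d) ℂ)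
    (ψ : (Fin n → Fin d) → ℂ) : (Fin n → Fin d) → ℂ :=
  fun x => ∑ j : Fin d, B (x k) j * ψ (Function.update x k j)

/-- The operator `A 1 ⊗ A 2 ⊗ ⋯ ⊗ A n` acting on an `n`-qudit state. -/
noncomputable def appAll {n d : ℕ} (A : Fin n → Matrix (Fin d) (Fin d) ℂ)
    (ψ : (Fin n → Fin d) → ℂ) : (Fin n → Fin d) → ℂ :=
  fun x => ∑ y : Fin n → Fin d, (∏ k, A k (x k) (y k)) * ψ y

section aux
variable {n d : ℕ}

lemma appAt_perm (σ : Equiv.Perm (Fin n)) (a : Fin n) (X : Matrix (Fin d) (Fin d) ℂ)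
    (v : (Fin n → Fin d) → ℂ) (x : Fin n → Fin d) :
    appAt a X v (x ∘ σ) = appAt (σ a) X (fun y => v (y ∘ σ)) x := by
  unfold appAt
  refine Finset.sum_congr rfl fun j _ => ?_
  simp only [Function.comp_apply]
  congr 1
  have := Function.update_comp_equiv x (σ : Fin n ≃ Fin n) (σ a) j
  rw [Equiv.symm_apply_apply] at this
  rw [← this]

lemma appAt_perm' (σ : Equiv.Perm (Fin n)) (a : Fin n) (X : Matrix (Fin d) (Fin d) ℂ)
    {v : (Fin n → Fin d) → ℂ} (hv : PSym v) (x : Fin n → Fin d) :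
    appAt a X v (x ∘ σ) = appAt (σ a) X v x := by
  rw [appAt_perm]
  unfold appAt
  exact Finset.sum_congr rfl fun j _ => congrArg (X (x (σ a)) j * ·) (hv σ _)

lemma appAt_comm {a b : Fin n} (hab : a ≠ b) (X Y : Matrix (Fin d) (Fin d) ℂ)
    (v : (Fin n → Fin d) → ℂ) :
    appAt a X (appAt b Y v) = appAt b Y (appAt a X v) := by
  funext x
  unfold appAt
  simp only [Finset.mul_sum]
  rw [Finset.sum_comm]
  refine Finset.sum_congr rfl fun j _ => Finset.sum_congr rfl fun l _ => ?_
  rw [Function.update_of_ne hab.symm, Function.update_of_ne hab,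
    Function.update_comm hab]
  ring

lemma appAt_one (k : Fin n) (v : (Fin n → Fin d) → ℂ) :
    appAt k (1 : Matrix (Fin d) (Fin d) ℂ) v = v := by
  funext x
  unfold appAt
  rw [Finset.sum_eq_single (x k)]
  · simp
  · intro j _ hj
    simp [Matrix.one_apply, hj.symm]
  · simp

lemma appAt_mul (k : Fin n) (B C : Matrix (Fin d) (Fin d) ℂ)
    (v : (Fin n → Fin d) → ℂ) :
    appAt k (B * C) v = appAt k B (appAt k C v) := by
  funext x
  unfold appAt
  simp only [Matrix.mul_apply, Function.update_self, Function.update_idem,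
    Finset.sum_mul, Finset.mul_sum]
  rw [Finset.sum_comm]
  exact Finset.sum_congr rfl fun j _ => Finset.sum_congr rfl fun l _ => by ring

lemma appAt_smul (k : Fin n) (c : ℂ) (B : Matrix (Fin d) (Fin d) ℂ)
    (v : (Fin n → Fin d) → ℂ) :
    appAt k (c • B) v = fun x => c * appAt k B v x := by
  funext x
  unfold appAt
  rw [Finset.mul_sum]
  exact Finset.sum_congr rfl fun j _ => by simp [Matrix.smul_apply]; ring

lemma appAt_add (k : Fin n) (B C : Matrix (Fin d) (Fin d) ℂ)
    (v : (Fin n → Fin d) → ℂ) :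
    appAt k (B + C) v = fun x => appAt k B v x + appAt k C v x := by
  funext x
  unfold appAt
  rw [← Finset.sum_add_distrib]
  exact Finset.sum_congr rfl fun j _ => by simp [Matrix.add_apply]; ring

lemma psym_smul {v : (Fin n → Fin d) → ℂ} (hv : PSym v) (c : ℂ) :
    PSym (fun x => c * v x) := fun σ x => by simp [hv σ x]

lemma psym_add {v w : (Fin n → Fin d) → ℂ} (hv : PSym v) (hw : PSym w) :
    PSym (fun x => v x + w x) := fun σ x => by simp [hv σ x, hw σ x]

/-- Key step: under the hypotheses, `appAt a X ψ = appAt 0 X ψ` for every `a`. -/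
lemma appAt_all_eq (hn : 3 ≤ n) {ψ : (Fin n → Fin d) → ℂ} (hψ : PSym ψ)
    {X : Matrix (Fin d) (Fin d) ℂ} (hX : PSym (appAt ⟨0, Nat.lt_of_lt_of_le (Nat.succ_pos 2) hn⟩ X ψ))
    (a : Fin n) : appAt a X ψ = appAt ⟨0, Nat.lt_of_lt_of_le (Nat.succ_pos 2) hn⟩ X ψ := by
  set z : Fin n := ⟨0, Nat.lt_of_lt_of_le (Nat.succ_pos 2) hn⟩
  funext x
  have σ := Equiv.swap z a
  have h1 : appAt z X ψ (x ∘ Equiv.swap z a) = appAt a X ψ x := by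
    rw [appAt_perm' _ _ _ hψ, Equiv.swap_apply_left]
  rw [← h1, hX (Equiv.swap z a) x]

/-- Two-step lemma: symmetric ψ with symmetric Xψ gives symmetric X²ψ (n ≥ 3). -/
lemma psym_step (hn : 3 ≤ n) {ψ : (Fin n → Fin d) → ℂ} (hψ : PSym ψ)
    {X : Matrix (Fin d) (Fin d) ℂ} (hX : PSym (appAt ⟨0, Nat.lt_of_lt_of_le (Nat.succ_pos 2) hn⟩ X ψ)) :
    PSym (appAt ⟨0, Nat.lt_of_lt_of_le (Nat.succ_pos 2) hn⟩ X (appAt ⟨0, Nat.lt_of_lt_of_le (Nat.succ_pos 2) hn⟩ X ψ)) := by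
  set z : Fin n := ⟨0, Nat.lt_of_lt_of_le (Nat.succ_pos 2) hn⟩ with hz
  set φ := appAt z X ψ with hφ
  have hall : ∀ a : Fin n, appAt a X ψ = φ := appAt_all_eq hn hψ hX
  -- appAt a X φ is independent of a
  have key : ∀ a : Fin n, appAt a X φ = appAt z X φ := by
    have pair : ∀ a b : Fin n, a ≠ b → appAt a X φ = appAt b X φ := by
      intro a b hab
      calc appAt a X φ = appAt a X (appAt b X ψ) := by rw [hall b]
        _ = appAt b X (appAt a X ψ) := appAt_comm hab X X ψ
        _ = appAt b X φ := by rw [hall a]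
    intro a
    by_cases ha : a = z
    · rw [ha]
    · -- pick c different from a and z
      have : ∃ c : Fin n, c ≠ a ∧ c ≠ z := by
        by_cases h1 : a = ⟨1, by omega⟩
        · exact ⟨⟨2, by omega⟩, by simp [h1, hz, Fin.ext_iff], by simp [hz, Fin.ext_iff]⟩
        · exact ⟨⟨1, by omega⟩, fun h => h1 h.symm, by simp [hz, Fin.ext_iff]⟩
      obtain ⟨c, hca, hcz⟩ := this
      rw [pair a c (fun h => hca h.symm), pair c z hcz]
  intro σ x
  rw [appAt_perm' σ z X hX x]
  rw [key (σ z)]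

lemma psym_iterate (hn : 3 ≤ n) {ψ : (Fin n → Fin d) → ℂ} (hψ : PSym ψ)
    {X : Matrix (Fin d) (Fin d) ℂ} (hX : PSym (appAt ⟨0, Nat.lt_of_lt_of_le (Nat.succ_pos 2) hn⟩ X ψ))
    (m : ℕ) : PSym (appAt ⟨0, Nat.lt_of_lt_of_le (Nat.succ_pos 2) hn⟩ (X ^ m) ψ) := by
  set z : Fin n := ⟨0, Nat.lt_of_lt_of_le (Nat.succ_pos 2) hn⟩
  suffices h : ∀ m, PSym ((appAt z X)^[m] ψ) ∧ PSym ((appAt z X)^[m+1] ψ) by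
    have hiter : ∀ m, appAt z (X ^ m) ψ = (appAt z X)^[m] ψ := by
      intro m
      induction m with
      | zero => simp [appAt_one]
      | succ k ih => rw [pow_succ', appAt_mul, ih, Function.iterate_succ_apply']
    rw [hiter]; exact (h m).1
  intro m
  induction m with
  | zero => exact ⟨hψ, hX⟩
  | succ k ih =>
    refine ⟨ih.2, ?_⟩
    have := psym_step hn ih.1 (X := X) ?_
    · simpa [Function.iterate_succ_apply'] using this
    · simpa [Function.iterate_succ_apply'] using ih.2

end aux

theorem stmt_5 {n d : ℕ} (hn : 3 ≤ n) (ψ : (Fin n → Fin d) → ℂ) (hψ : PSym ψ)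
    (X : Matrix (Fin d) (Fin d) ℂ)
    (hX : PSym (appAt ⟨0, by omega⟩ X ψ))
    (f : Polynomial ℂ) :
    PSym (appAt ⟨0, by omega⟩ (Polynomial.aeval X f) ψ) := by
  induction f using Polynomial.induction_on with
  | C a =>
    have : (Polynomial.aeval X (Polynomial.C a) : Matrix (Fin d) (Fin d) ℂ)
        = a • (1 : Matrix (Fin d) (Fin d) ℂ) := by
      simp [Algebra.algebraMap_eq_smul_one]
    rw [this, appAt_smul, appAt_one]
    exact psym_smul hψ a
  | add p q hp hq =>
    rw [map_add, appAt_add]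
    exact psym_add hp hq
  | monomial m a _ =>
    have : (Polynomial.aeval X (Polynomial.C a * Polynomial.X ^ (m+1)) : Matrix (Fin d) (Fin d) ℂ)
        = a • (X ^ (m+1)) := by
      simp [Algebra.algebraMap_eq_smul_one, smul_mul_assoc]
    rw [this, appAt_smul]
    exact psym_smul (psym_iterate hn hψ hX (m+1)) a
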